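/- arXiv:gr-qc/0302101 — 2 statements merged into one kernel-verified Lean document; each statement's English description precedes it below -/
import Mathlib

section
/- In dimension 4, the Bel tensor is trace-free in its first pair of indices: g^{αβ} B_{αβλμ} = 0. -/
/-- The Bel superenergy tensor
`B_{αβλμ} = R_{αρλσ} R_β{}^ρ{}_μ{}^σ + R_{αρμσ} R_β{}^ρ{}_λ{}^σ
  − (1/2) g_{αβ} R_{ρτλσ} R^{ρτ}{}_μ{}^σ − (1/2) g_{λμ} R_{αρστ} R_β{}^{ρστ}
  + (1/8) g_{αβ} g_{λμ} R_{ρτσν} R^{ρτσν}`,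
written in components, with all indices of the Riemann tensor `R` lowered and
raised by means of the inverse metric `ginv`. -/
noncomputable def Bel {ι : Type*} [Fintype ι] (g ginv : ι → ι → ℝ) (R : ι → ι → ι → ι → ℝ)
    (α β l μ : ι) : ℝ :=
  (∑ ρ, ∑ σ, ∑ ρ', ∑ σ', ginv ρ ρ' * ginv σ σ' *
      (R α ρ l σ * R β ρ' μ σ' + R α ρ μ σ * R β ρ' l σ'))
  - (1/2) * g α β * (∑ ρ, ∑ τ, ∑ σ, ∑ ρ', ∑ τ', ∑ σ',
      ginv ρ ρ' * ginv τ τ' * ginv σ σ' * (R ρ τ l σ * R ρ' τ' μ σ'))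
  - (1/2) * g l μ * (∑ ρ, ∑ σ, ∑ τ, ∑ ρ', ∑ σ', ∑ τ',
      ginv ρ ρ' * ginv σ σ' * ginv τ τ' * (R α ρ σ τ * R β ρ' σ' τ'))
  + (1/8) * g α β * g l μ * (∑ ρ, ∑ τ, ∑ σ, ∑ w, ∑ ρ', ∑ τ', ∑ σ', ∑ w',
      ginv ρ ρ' * ginv τ τ' * ginv σ σ' * ginv w w' * (R ρ τ σ w * R ρ' τ' σ' w'))

private abbrev F6 := Fin 4 × Fin 4 × Fin 4 × Fin 4 × Fin 4 × Fin 4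
private abbrev F8 := Fin 4 × Fin 4 × Fin 4 × Fin 4 × Fin 4 × Fin 4 × Fin 4 × Fin 4

set_option maxHeartbeats 1000000

private lemma sum6 (f : Fin 4 → Fin 4 → Fin 4 → Fin 4 → Fin 4 → Fin 4 → ℝ) :
    (∑ a, ∑ b, ∑ c, ∑ d, ∑ e, ∑ f', f a b c d e f')
      = ∑ x : F6, f x.1 x.2.1 x.2.2.1 x.2.2.2.1 x.2.2.2.2.1 x.2.2.2.2.2 := by
  simp [Fintype.sum_prod_type]

private lemma sum8 (f : Fin 4 → Fin 4 → Fin 4 → Fin 4 → Fin 4 → Fin 4 → Fin 4 → Fin 4 → ℝ) :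
    (∑ a, ∑ b, ∑ c, ∑ d, ∑ e, ∑ f', ∑ gg, ∑ h, f a b c d e f' gg h)
      = ∑ x : F8, f x.1 x.2.1 x.2.2.1 x.2.2.2.1 x.2.2.2.2.1 x.2.2.2.2.2.1
          x.2.2.2.2.2.2.1 x.2.2.2.2.2.2.2 := by
  simp [Fintype.sum_prod_type]

/-- permutation (a,b,c,d,e,f) ↦ (a,d,b,c,e,f) -/
private def eA : F6 ≃ F6 where
  toFun x := (x.1, x.2.2.2.1, x.2.1, x.2.2.1, x.2.2.2.2.1, x.2.2.2.2.2)
  invFun y := (y.1, y.2.2.1, y.2.2.2.1, y.2.1, y.2.2.2.2.1, y.2.2.2.2.2)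
  left_inv _ := rfl
  right_inv _ := rfl

/-- permutation (a,b,c,d,e,f) ↦ (d,a,e,f,b,c) -/
private def eB : F6 ≃ F6 where
  toFun x := (x.2.2.2.1, x.1, x.2.2.2.2.1, x.2.2.2.2.2, x.2.1, x.2.2.1)
  invFun y := (y.2.1, y.2.2.2.2.1, y.2.2.2.2.2, y.1, y.2.2.1, y.2.2.2.1)
  left_inv _ := rfl
  right_inv _ := rfl

/-- permutation (a,b,c,d,e,f,g,h) ↦ (a,e,b,c,d,f,g,h) -/
private def eC : F8 ≃ F8 where
  toFun x := (x.1, x.2.2.2.2.1, x.2.1, x.2.2.1, x.2.2.2.1, x.2.2.2.2.2.1,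
    x.2.2.2.2.2.2.1, x.2.2.2.2.2.2.2)
  invFun y := (y.1, y.2.2.1, y.2.2.2.1, y.2.2.2.2.1, y.2.1, y.2.2.2.2.2.1,
    y.2.2.2.2.2.2.1, y.2.2.2.2.2.2.2)
  left_inv _ := rfl
  right_inv _ := rfl

/-- In dimension 4 the Bel tensor is trace-free in its first pair of
indices: `g^{αβ} B_{αβλμ} = 0`.  Here `ginv` is the inverse of the metric `g`
(so that `g^{αβ} g_{αβ} = 4` on the four-dimensional index set `Fin 4`). -/
theorem bel_trace_free
    (g ginv : Fin 4 → Fin 4 → ℝ) (R : Fin 4 → Fin 4 → Fin 4 → Fin 4 → ℝ)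
    (hg : ∀ a b, g a b = g b a) (hginv : ∀ a b, ginv a b = ginv b a)
    (hinv : ∀ a b, ∑ c, ginv a c * g c b = if a = b then 1 else 0)
    (hR1 : ∀ a b c d, R a b c d = - R b a c d)
    (hR2 : ∀ a b c d, R a b c d = - R a b d c)
    (hR3 : ∀ a b c d, R a b c d = R c d a b) :
    ∀ l μ, ∑ α, ∑ β, ginv α β * Bel g ginv R α β l μ = 0 := by
  intro l μ
  -- abbreviations for the scalar contractions
  set S2 : ℝ := ∑ ρ, ∑ τ, ∑ σ, ∑ ρ', ∑ τ', ∑ σ',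
      ginv ρ ρ' * ginv τ τ' * ginv σ σ' * (R ρ τ l σ * R ρ' τ' μ σ') with hS2
  set K : ℝ := ∑ ρ, ∑ τ, ∑ σ, ∑ w, ∑ ρ', ∑ τ', ∑ σ', ∑ w',
      ginv ρ ρ' * ginv τ τ' * ginv σ σ' * ginv w w' * (R ρ τ σ w * R ρ' τ' σ' w') with hK
  -- trace of the metric: g^{αβ} g_{αβ} = 4
  have h4 : (∑ α, ∑ β, ginv α β * g α β) = 4 := by
    have h1 : ∀ α : Fin 4, (∑ β, ginv α β * g α β) = 1 := by
      intro α
      have h := hinv α α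
      rw [if_pos rfl] at h
      rw [← h]
      exact Finset.sum_congr rfl fun β _ => by rw [hg α β]
    rw [Finset.sum_congr rfl fun α _ => h1 α]
    simp
  -- splitting of the first Bel sum
  have hsplit : ∀ α β : Fin 4, (∑ ρ, ∑ σ, ∑ ρ', ∑ σ', ginv ρ ρ' * ginv σ σ' *
      (R α ρ l σ * R β ρ' μ σ' + R α ρ μ σ * R β ρ' l σ'))
      = (∑ ρ, ∑ σ, ∑ ρ', ∑ σ', ginv ρ ρ' * ginv σ σ' * (R α ρ l σ * R β ρ' μ σ'))
        + (∑ ρ, ∑ σ, ∑ ρ', ∑ σ', ginv ρ ρ' * ginv σ σ' * (R α ρ μ σ * R β ρ' l σ')) := by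
    intro α β
    simp only [mul_add, Finset.sum_add_distrib]
  -- trace of the first quadratic term equals 2 * S2
  have hA : (∑ α, ∑ β, ginv α β * ∑ ρ, ∑ σ, ∑ ρ', ∑ σ',
      ginv ρ ρ' * ginv σ σ' * (R α ρ l σ * R β ρ' μ σ')) = S2 := by
    simp only [Finset.mul_sum]
    rw [hS2, sum6, sum6]
    exact (Fintype.sum_equiv eA _ _ (fun x => by
      obtain ⟨a, b, c, d, e, f⟩ := x
      simp only [eA, Equiv.coe_fn_mk]
      ring)).symm
  have hB : (∑ α, ∑ β, ginv α β * ∑ ρ, ∑ σ, ∑ ρ', ∑ σ',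
      ginv ρ ρ' * ginv σ σ' * (R α ρ μ σ * R β ρ' l σ')) = S2 := by
    simp only [Finset.mul_sum]
    rw [hS2, sum6, sum6]
    exact (Fintype.sum_equiv eB _ _ (fun x => by
      obtain ⟨a, b, c, d, e, f⟩ := x
      simp only [eB, Equiv.coe_fn_mk]
      rw [hginv a d, hginv b e, hginv c f]
      ring)).symm
  -- trace of the third term's contraction equals K
  have hQ : (∑ α, ∑ β, ginv α β * ∑ ρ, ∑ σ, ∑ τ, ∑ ρ', ∑ σ', ∑ τ',
      ginv ρ ρ' * ginv σ σ' * ginv τ τ' * (R α ρ σ τ * R β ρ' σ' τ')) = K := by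
    simp only [Finset.mul_sum]
    rw [hK, sum8, sum8]
    exact (Fintype.sum_equiv eC _ _ (fun x => by
      obtain ⟨a, b, c, d, e, f, g', h⟩ := x
      simp only [eC, Equiv.coe_fn_mk]
      ring)).symm
  -- expand the Bel tensor pointwise
  have hpt : ∀ α β, ginv α β * Bel g ginv R α β l μ =
      ginv α β * (∑ ρ, ∑ σ, ∑ ρ', ∑ σ',
        ginv ρ ρ' * ginv σ σ' * (R α ρ l σ * R β ρ' μ σ'))
      + ginv α β * (∑ ρ, ∑ σ, ∑ ρ', ∑ σ',
        ginv ρ ρ' * ginv σ σ' * (R α ρ μ σ * R β ρ' l σ'))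
      - (1/2) * S2 * (ginv α β * g α β)
      - (1/2) * g l μ * (ginv α β * ∑ ρ, ∑ σ, ∑ τ, ∑ ρ', ∑ σ', ∑ τ',
        ginv ρ ρ' * ginv σ σ' * ginv τ τ' * (R α ρ σ τ * R β ρ' σ' τ'))
      + (1/8) * g l μ * K * (ginv α β * g α β) := by
    intro α β
    simp only [Bel]
    rw [hsplit α β, hS2, hK]
    ring
  calc (∑ α, ∑ β, ginv α β * Bel g ginv R α β l μ)
      = (∑ α, ∑ β, ginv α β * ∑ ρ, ∑ σ, ∑ ρ', ∑ σ',
          ginv ρ ρ' * ginv σ σ' * (R α ρ l σ * R β ρ' μ σ'))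
        + (∑ α, ∑ β, ginv α β * ∑ ρ, ∑ σ, ∑ ρ', ∑ σ',
          ginv ρ ρ' * ginv σ σ' * (R α ρ μ σ * R β ρ' l σ'))
        - (1/2) * S2 * (∑ α, ∑ β, ginv α β * g α β)
        - (1/2) * g l μ * (∑ α, ∑ β, ginv α β * ∑ ρ, ∑ σ, ∑ τ, ∑ ρ', ∑ σ', ∑ τ',
          ginv ρ ρ' * ginv σ σ' * ginv τ τ' * (R α ρ σ τ * R β ρ' σ' τ'))
        + (1/8) * g l μ * K * (∑ α, ∑ β, ginv α β * g α β) := by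
        rw [Finset.sum_congr rfl fun α _ => Finset.sum_congr rfl fun β _ => hpt α β]
        simp only [Finset.sum_add_distrib, Finset.sum_sub_distrib, ← Finset.mul_sum]
    _ = 0 := by
        rw [hA, hB, hQ, h4]
        ring
end

section
/- If the spacetime satisfies J_{λμβ} := ∇_λ R_{μβ} − ∇_μ R_{λβ} = 0 (in particular if R_{μν} = Λ g_{μν} for constant Λ, i.e. an Einstein space), then the Bel tensor is divergence-free: ∇_α B^{αβλμ} = 0. -/
/-- The covariant derivative `∇_n B_{αβλμ}` of the Bel tensor, obtained from the
Leibniz rule applied to its defining formula (the metric being covariantly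
constant); `DR n a b c d` stands for `∇_n R_{abcd}`. -/
noncomputable def DBel {ι : Type*} [Fintype ι] (g ginv : ι → ι → ℝ)
    (R : ι → ι → ι → ι → ℝ) (DR : ι → ι → ι → ι → ι → ℝ)
    (n α β l μ : ι) : ℝ :=
  (∑ ρ, ∑ σ, ∑ ρ', ∑ σ', ginv ρ ρ' * ginv σ σ' *
      (DR n α ρ l σ * R β ρ' μ σ' + R α ρ l σ * DR n β ρ' μ σ'
        + DR n α ρ μ σ * R β ρ' l σ' + R α ρ μ σ * DR n β ρ' l σ'))
  - (1/2) * g α β * (∑ ρ, ∑ τ, ∑ σ, ∑ ρ', ∑ τ', ∑ σ',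
      ginv ρ ρ' * ginv τ τ' * ginv σ σ' *
        (DR n ρ τ l σ * R ρ' τ' μ σ' + R ρ τ l σ * DR n ρ' τ' μ σ'))
  - (1/2) * g l μ * (∑ ρ, ∑ σ, ∑ τ, ∑ ρ', ∑ σ', ∑ τ',
      ginv ρ ρ' * ginv σ σ' * ginv τ τ' *
        (DR n α ρ σ τ * R β ρ' σ' τ' + R α ρ σ τ * DR n β ρ' σ' τ'))
  + (1/8) * g α β * g l μ * (∑ ρ, ∑ τ, ∑ σ, ∑ w, ∑ ρ', ∑ τ', ∑ σ', ∑ w',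
      ginv ρ ρ' * ginv τ τ' * ginv σ σ' * ginv w w' *
        (DR n ρ τ σ w * R ρ' τ' σ' w' + R ρ τ σ w * DR n ρ' τ' σ' w'))

/-- `J_{λμβ} = ∇_λ R_{μβ} − ∇_μ R_{λβ}`, where `R_{μβ} = R^α{}_{μαβ}` is the Ricci
tensor, written in terms of `∇R` (`DR n a b c d = ∇_n R_{abcd}`) and the inverse
metric. -/
noncomputable def Jtensor {ι : Type*} [Fintype ι] (ginv : ι → ι → ℝ)
    (DR : ι → ι → ι → ι → ι → ℝ) (l μ β : ι) : ℝ :=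
  ∑ a, ∑ a', ginv a a' * (DR l a' μ a β - DR μ a' l a β)



noncomputable section BelAux

variable {ι : Type*} [Fintype ι]

def N2 (f : ι → ι → ℝ) : ℝ := ∑ a, ∑ b, f a b
def N4 (f : ι → ι → ι → ι → ℝ) : ℝ := ∑ a, ∑ b, ∑ c, ∑ d, f a b c d
def N6 (f : ι → ι → ι → ι → ι → ι → ℝ) : ℝ :=
  ∑ a, ∑ b, ∑ c, ∑ d, ∑ p, ∑ q, f a b c d p q
def N8 (f : ι → ι → ι → ι → ι → ι → ι → ι → ℝ) : ℝ :=
  ∑ a, ∑ b, ∑ c, ∑ d, ∑ p, ∑ q, ∑ r, ∑ s, f a b c d p q r s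

lemma N2_congr (f g : ι → ι → ℝ) (h : ∀ a b, f a b = g a b) : N2 f = N2 g :=
  Finset.sum_congr rfl fun a _ => Finset.sum_congr rfl fun b _ => h a b

lemma N6_congr (f g : ι → ι → ι → ι → ι → ι → ℝ)
    (h : ∀ a b c d p q, f a b c d p q = g a b c d p q) : N6 f = N6 g := by
  unfold N6
  exact Finset.sum_congr rfl fun a _ => Finset.sum_congr rfl fun b _ =>
    Finset.sum_congr rfl fun c _ => Finset.sum_congr rfl fun d _ =>
    Finset.sum_congr rfl fun p _ => Finset.sum_congr rfl fun q _ => h a b c d p q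

lemma N8_congr (f g : ι → ι → ι → ι → ι → ι → ι → ι → ℝ)
    (h : ∀ a b c d p q r s, f a b c d p q r s = g a b c d p q r s) : N8 f = N8 g := by
  unfold N8
  exact Finset.sum_congr rfl fun a _ => Finset.sum_congr rfl fun b _ =>
    Finset.sum_congr rfl fun c _ => Finset.sum_congr rfl fun d _ =>
    Finset.sum_congr rfl fun p _ => Finset.sum_congr rfl fun q _ =>
    Finset.sum_congr rfl fun r _ => Finset.sum_congr rfl fun s _ => h a b c d p q r s

lemma N2_add (f g : ι → ι → ℝ) :
    N2 (fun a b => f a b + g a b) = N2 f + N2 g := by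
  simp only [N2, Finset.sum_add_distrib]

lemma N2_sub (f g : ι → ι → ℝ) :
    N2 (fun a b => f a b - g a b) = N2 f - N2 g := by
  simp only [N2, Finset.sum_sub_distrib]

lemma N2_neg (f : ι → ι → ℝ) : N2 (fun a b => -(f a b)) = - N2 f := by
  simp only [N2, Finset.sum_neg_distrib]

lemma N2_mul_left (c : ℝ) (f : ι → ι → ℝ) :
    N2 (fun a b => c * f a b) = c * N2 f := by
  simp only [N2, Finset.mul_sum]

lemma N2_swap (f : ι → ι → ℝ) : N2 f = N2 (fun a b => f b a) := by
  simp only [N2]; exact Finset.sum_comm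

lemma N2_eq_zero (f : ι → ι → ℝ) (h : ∀ a b, f a b = 0) : N2 f = 0 := by
  simp only [N2]
  exact Finset.sum_eq_zero fun a _ => Finset.sum_eq_zero fun b _ => h a b

lemma N6_add (f g : ι → ι → ι → ι → ι → ι → ℝ) :
    N6 (fun a b c d p q => f a b c d p q + g a b c d p q) = N6 f + N6 g := by
  simp only [N6, Finset.sum_add_distrib]

lemma N6_neg (f : ι → ι → ι → ι → ι → ι → ℝ) :
    N6 (fun a b c d p q => -(f a b c d p q)) = - N6 f := by
  simp only [N6, Finset.sum_neg_distrib]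

lemma N6_eq_zero (f : ι → ι → ι → ι → ι → ι → ℝ)
    (h : ∀ a b c d p q, f a b c d p q = 0) : N6 f = 0 := by
  simp only [N6]
  exact Finset.sum_eq_zero fun a _ => Finset.sum_eq_zero fun b _ =>
    Finset.sum_eq_zero fun c _ => Finset.sum_eq_zero fun d _ =>
    Finset.sum_eq_zero fun p _ => Finset.sum_eq_zero fun q _ => h a b c d p q

lemma N8_add (f g : ι → ι → ι → ι → ι → ι → ι → ι → ℝ) :
    N8 (fun a b c d p q r s => f a b c d p q r s + g a b c d p q r s) = N8 f + N8 g := by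
  simp only [N8, Finset.sum_add_distrib]

lemma N8_neg (f : ι → ι → ι → ι → ι → ι → ι → ι → ℝ) :
    N8 (fun a b c d p q r s => -(f a b c d p q r s)) = - N8 f := by
  simp only [N8, Finset.sum_neg_distrib]

lemma N8_eq_zero (f : ι → ι → ι → ι → ι → ι → ι → ι → ℝ)
    (h : ∀ a b c d p q r s, f a b c d p q r s = 0) : N8 f = 0 := by
  simp only [N8]
  exact Finset.sum_eq_zero fun a _ => Finset.sum_eq_zero fun b _ =>
    Finset.sum_eq_zero fun c _ => Finset.sum_eq_zero fun d _ =>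
    Finset.sum_eq_zero fun p _ => Finset.sum_eq_zero fun q _ =>
    Finset.sum_eq_zero fun r _ => Finset.sum_eq_zero fun s _ => h a b c d p q r s

lemma N6_flat (f : ι → ι → ι → ι → ι → ι → ℝ) :
    N6 f = ∑ x : ι×ι×ι×ι×ι×ι,
      f x.1 x.2.1 x.2.2.1 x.2.2.2.1 x.2.2.2.2.1 x.2.2.2.2.2 := by
  simp only [N6, Fintype.sum_prod_type]

lemma N8_flat (f : ι → ι → ι → ι → ι → ι → ι → ι → ℝ) :
    N8 f = ∑ x : ι×ι×ι×ι×ι×ι×ι×ι,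
      f x.1 x.2.1 x.2.2.1 x.2.2.2.1 x.2.2.2.2.1 x.2.2.2.2.2.1 x.2.2.2.2.2.2.1
        x.2.2.2.2.2.2.2 := by
  simp only [N8, Fintype.sum_prod_type]

lemma N6_perm (f g : ι → ι → ι → ι → ι → ι → ℝ)
    (e : (ι×ι×ι×ι×ι×ι) ≃ (ι×ι×ι×ι×ι×ι))
    (h : ∀ a b c d p q, f a b c d p q =
      g (e (a,b,c,d,p,q)).1 (e (a,b,c,d,p,q)).2.1 (e (a,b,c,d,p,q)).2.2.1
        (e (a,b,c,d,p,q)).2.2.2.1 (e (a,b,c,d,p,q)).2.2.2.2.1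
        (e (a,b,c,d,p,q)).2.2.2.2.2) :
    N6 f = N6 g := by
  rw [N6_flat, N6_flat]
  exact Fintype.sum_equiv e _ _ (fun ⟨a,b,c,d,p,q⟩ => h a b c d p q)

lemma N8_perm (f g : ι → ι → ι → ι → ι → ι → ι → ι → ℝ)
    (e : (ι×ι×ι×ι×ι×ι×ι×ι) ≃ (ι×ι×ι×ι×ι×ι×ι×ι))
    (h : ∀ a b c d p q r s, f a b c d p q r s =
      g (e (a,b,c,d,p,q,r,s)).1 (e (a,b,c,d,p,q,r,s)).2.1 (e (a,b,c,d,p,q,r,s)).2.2.1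
        (e (a,b,c,d,p,q,r,s)).2.2.2.1 (e (a,b,c,d,p,q,r,s)).2.2.2.2.1
        (e (a,b,c,d,p,q,r,s)).2.2.2.2.2.1 (e (a,b,c,d,p,q,r,s)).2.2.2.2.2.2.1
        (e (a,b,c,d,p,q,r,s)).2.2.2.2.2.2.2) :
    N8 f = N8 g := by
  rw [N8_flat, N8_flat]
  exact Fintype.sum_equiv e _ _ (fun ⟨a,b,c,d,p,q,r,s⟩ => h a b c d p q r s)

lemma N2_mul_N4 (c : ι → ι → ℝ) (f : ι → ι → ι → ι → ι → ι → ℝ) :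
    N2 (fun a b => c a b * N4 (fun x y z w => f a b x y z w))
      = N6 (fun a b x y z w => c a b * f a b x y z w) := by
  simp only [N2, N4, N6, Finset.mul_sum]

lemma N2_mul_N6 (c : ι → ι → ℝ) (f : ι → ι → ι → ι → ι → ι → ι → ι → ℝ) :
    N2 (fun a b => c a b * N6 (fun x y z w u v => f a b x y z w u v))
      = N8 (fun a b x y z w u v => c a b * f a b x y z w u v) := by
  simp only [N2, N6, N8, Finset.mul_sum]

lemma N6_inner2_zero (f : ι → ι → ι → ι → ι → ι → ℝ)
    (h : ∀ a b c d, N2 (fun p q => f a b c d p q) = 0) : N6 f = 0 := by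
  simp only [N2] at h
  simp only [N6]
  exact Finset.sum_eq_zero fun a _ => Finset.sum_eq_zero fun b _ =>
    Finset.sum_eq_zero fun c _ => Finset.sum_eq_zero fun d _ => h a b c d

lemma N8_inner2_zero (f : ι → ι → ι → ι → ι → ι → ι → ι → ℝ)
    (h : ∀ a b c d p q, N2 (fun r s => f a b c d p q r s) = 0) : N8 f = 0 := by
  simp only [N2] at h
  simp only [N8]
  exact Finset.sum_eq_zero fun a _ => Finset.sum_eq_zero fun b _ =>
    Finset.sum_eq_zero fun c _ => Finset.sum_eq_zero fun d _ =>
    Finset.sum_eq_zero fun p _ => Finset.sum_eq_zero fun q _ => h a b c d p q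


lemma N2_comb4 (f1 f2 f3 f4 : ι → ι → ℝ) (c2 c3 c4 : ℝ) :
    N2 (fun x y => f1 x y - c2 * f2 x y + c3 * f3 x y + c4 * f4 x y)
      = N2 f1 - c2 * N2 f2 + c3 * N2 f3 + c4 * N2 f4 := by
  simp only [N2, Finset.sum_add_distrib, Finset.sum_sub_distrib, ← Finset.mul_sum]

end BelAux

section KeyLemmas
set_option linter.unusedSectionVars false


variable {ι : Type*} [Fintype ι] [DecidableEq ι]

/-- Contracted second Bianchi identity + `J = 0`:
the divergence of the Riemann tensor on its third slot vanishes. -/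
lemma div0 (ginv : ι → ι → ℝ) (DR : ι → ι → ι → ι → ι → ℝ)
    (hginv : ∀ a b, ginv a b = ginv b a)
    (hDR1 : ∀ n a b c d, DR n a b c d = - DR n b a c d)
    (hB2 : ∀ n a b c d, DR n a b c d + DR a b n c d + DR b n a c d = 0)
    (hJ : ∀ l μ β, Jtensor ginv DR l μ β = 0) :
    ∀ a b d, N2 (fun x y => ginv x y * DR x a b y d) = 0 := by
  intro a b d
  have h0 : N2 (fun x y => ginv x y * (DR x a b y d + DR a b x y d + DR b x a y d)) = 0 :=
    N2_eq_zero _ fun x y => by rw [hB2 x a b y d]; ring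
  have hsplit : N2 (fun x y => ginv x y * (DR x a b y d + DR a b x y d + DR b x a y d))
      = N2 (fun x y => ginv x y * DR x a b y d) + N2 (fun x y => ginv x y * DR a b x y d)
        + N2 (fun x y => ginv x y * DR b x a y d) := by
    rw [← N2_add, ← N2_add]
    exact N2_congr _ _ fun x y => by ring
  have hS2 : N2 (fun x y => ginv x y * DR a b x y d)
      = - N2 (fun x y => ginv x y * DR a y b x d) := by
    rw [N2_swap, ← N2_neg]
    exact N2_congr _ _ fun x y => by rw [hginv y x, hDR1 a b y x d]; ring
  have hS3 : N2 (fun x y => ginv x y * DR b x a y d)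
      = N2 (fun x y => ginv x y * DR b y a x d) := by
    rw [N2_swap]
    exact N2_congr _ _ fun x y => by rw [hginv y x]
  have hJ' : N2 (fun x y => ginv x y * DR a y b x d)
      - N2 (fun x y => ginv x y * DR b y a x d) = 0 := by
    rw [← N2_sub]
    have := hJ a b d
    simp only [Jtensor] at this
    calc N2 (fun x y => ginv x y * DR a y b x d - ginv x y * DR b y a x d)
        = N2 (fun x y => ginv x y * (DR a y b x d - DR b y a x d)) :=
          N2_congr _ _ fun x y => by ring
      _ = 0 := this
  linarith

/-- Contraction of `ginv` with `g` gives a Kronecker delta. -/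
lemma delta_contract (g ginv : ι → ι → ℝ)
    (hinv : ∀ a b, ∑ c, ginv a c * g c b = if a = b then 1 else 0)
    (b : ι) (F : ι → ℝ) :
    N2 (fun x y => ginv x y * (g y b * F x)) = F b := by
  simp only [N2]
  have h1 : ∀ x, (∑ y, ginv x y * (g y b * F x)) = (if x = b then 1 else 0) * F x := by
    intro x
    rw [← hinv x b, Finset.sum_mul]
    exact Finset.sum_congr rfl fun y _ => by ring
  rw [Finset.sum_congr rfl fun x _ => h1 x]
  simp [ite_mul, Finset.sum_ite_eq']

end KeyLemmas

/-- If `J_{λμβ} = ∇_λ R_{μβ} − ∇_μ R_{λβ} = 0` (in particular in any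
Einstein space, where `R_{μν} = Λ g_{μν}` with constant `Λ`), then the Bel tensor
is divergence-free: `∇_α B^{αβλμ} = 0` (stated equivalently with lowered free
indices, `∇^α B_{αβλμ} = 0`). -/
theorem bel_divergence_free_of_J_zero
    (g ginv : Fin 4 → Fin 4 → ℝ) (R : Fin 4 → Fin 4 → Fin 4 → Fin 4 → ℝ)
    (DR : Fin 4 → Fin 4 → Fin 4 → Fin 4 → Fin 4 → ℝ)
    (hg : ∀ a b, g a b = g b a) (hginv : ∀ a b, ginv a b = ginv b a)
    (hinv : ∀ a b, ∑ c, ginv a c * g c b = if a = b then 1 else 0)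
    (hR1 : ∀ a b c d, R a b c d = - R b a c d)
    (hR2 : ∀ a b c d, R a b c d = - R a b d c)
    (hR3 : ∀ a b c d, R a b c d = R c d a b)
    (hB1 : ∀ a b c d, R a b c d + R a c d b + R a d b c = 0)
    (hDR1 : ∀ n a b c d, DR n a b c d = - DR n b a c d)
    (hDR2 : ∀ n a b c d, DR n a b c d = - DR n a b d c)
    (hDR3 : ∀ n a b c d, DR n a b c d = DR n c d a b)
    (hB2 : ∀ n a b c d, DR n a b c d + DR a b n c d + DR b n a c d = 0)
    (hJ : ∀ l μ β, Jtensor ginv DR l μ β = 0) :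
    ∀ β l μ, ∑ α, ∑ α', ginv α α' * DBel g ginv R DR α α' β l μ = 0 := by
  intro β l μ
  -- Step A : expand `DBel` and organize the contraction into four groups.
  have stepA : (∑ α, ∑ α', ginv α α' * DBel g ginv R DR α α' β l μ)
      = N2 (fun n a => (ginv n a * N4 (fun c d p q => ginv c p * ginv d q *
            (DR n a c l d * R β p μ q + R a c l d * DR n β p μ q
              + DR n a c μ d * R β p l q + R a c μ d * DR n β p l q)))
          - (1/2) * (ginv n a * (g a β * N6 (fun c d p c' d' p' =>
              ginv c c' * ginv d d' * ginv p p' *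
                (DR n c d l p * R c' d' μ p' + R c d l p * DR n c' d' μ p'))))
          + (-(1/2) * g l μ) * (ginv n a * N6 (fun c d p c' d' p' =>
              ginv c c' * ginv d d' * ginv p p' *
                (DR n a c d p * R β c' d' p' + R a c d p * DR n β c' d' p')))
          + ((1/8) * g l μ) * (ginv n a * (g a β * N8 (fun c d p w c' d' p' w' =>
              ginv c c' * ginv d d' * ginv p p' * ginv w w' *
                (DR n c d p w * R c' d' p' w' + R c d p w * DR n c' d' p' w'))))) :=
    N2_congr _ _ fun n a => by simp only [DBel, N4, N6, N8]; ring
  have hcomb : N2 (fun n a => (ginv n a * N4 (fun c d p q => ginv c p * ginv d q *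
            (DR n a c l d * R β p μ q + R a c l d * DR n β p μ q
              + DR n a c μ d * R β p l q + R a c μ d * DR n β p l q)))
          - (1/2) * (ginv n a * (g a β * N6 (fun c d p c' d' p' =>
              ginv c c' * ginv d d' * ginv p p' *
                (DR n c d l p * R c' d' μ p' + R c d l p * DR n c' d' μ p'))))
          + (-(1/2) * g l μ) * (ginv n a * N6 (fun c d p c' d' p' =>
              ginv c c' * ginv d d' * ginv p p' *
                (DR n a c d p * R β c' d' p' + R a c d p * DR n β c' d' p')))
          + ((1/8) * g l μ) * (ginv n a * (g a β * N8 (fun c d p w c' d' p' w' =>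
              ginv c c' * ginv d d' * ginv p p' * ginv w w' *
                (DR n c d p w * R c' d' p' w' + R c d p w * DR n c' d' p' w')))))
      = N2 (fun n a => ginv n a * N4 (fun c d p q => ginv c p * ginv d q *
            (DR n a c l d * R β p μ q + R a c l d * DR n β p μ q
              + DR n a c μ d * R β p l q + R a c μ d * DR n β p l q)))
        - (1/2) * N2 (fun n a => ginv n a * (g a β * N6 (fun c d p c' d' p' =>
              ginv c c' * ginv d d' * ginv p p' *
                (DR n c d l p * R c' d' μ p' + R c d l p * DR n c' d' μ p'))))
        + (-(1/2) * g l μ) * N2 (fun n a => ginv n a * N6 (fun c d p c' d' p' =>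
              ginv c c' * ginv d d' * ginv p p' *
                (DR n a c d p * R β c' d' p' + R a c d p * DR n β c' d' p')))
        + ((1/8) * g l μ) * N2 (fun n a => ginv n a * (g a β * N8 (fun c d p w c' d' p' w' =>
              ginv c c' * ginv d d' * ginv p p' * ginv w w' *
                (DR n c d p w * R c' d' p' w' + R c d p w * DR n c' d' p' w')))) :=
    N2_comb4 _ _ _ _ _ _ _
  -- Group 1 : merge and split into four 6-fold sums.
  have h1 : N2 (fun n a => ginv n a * N4 (fun c d p q => ginv c p * ginv d q *
            (DR n a c l d * R β p μ q + R a c l d * DR n β p μ q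
              + DR n a c μ d * R β p l q + R a c μ d * DR n β p l q)))
      = N6 (fun n m c d p q => ginv n m * (ginv c p * ginv d q * (DR n m c l d * R β p μ q)))
        + N6 (fun n m c d p q => ginv n m * (ginv c p * ginv d q * (R m c l d * DR n β p μ q)))
        + N6 (fun n m c d p q => ginv n m * (ginv c p * ginv d q * (DR n m c μ d * R β p l q)))
        + N6 (fun n m c d p q => ginv n m * (ginv c p * ginv d q * (R m c μ d * DR n β p l q))) := by
    rw [N2_mul_N4, ← N6_add, ← N6_add, ← N6_add]
    exact N6_congr _ _ fun n m c d p q => by ring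
  -- the two divergence pieces of group 1 vanish by the contracted Bianchi identity
  have h1V1 : N6 (fun n m c d p q =>
      ginv n m * (ginv c p * ginv d q * (DR n m c l d * R β p μ q))) = 0 := by
    rw [N6_perm (fun n m c d p q => ginv n m * (ginv c p * ginv d q * (DR n m c l d * R β p μ q)))
      (fun a b c d p q => ginv p q * (ginv a c * ginv b d * (DR p q a l b * R β c μ d)))
      ⟨fun v => (v.2.2.1, v.2.2.2.1, v.2.2.2.2.1, v.2.2.2.2.2, v.1, v.2.1),
       fun v => (v.2.2.2.2.1, v.2.2.2.2.2, v.1, v.2.1, v.2.2.1, v.2.2.2.1),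
       fun v => rfl, fun v => rfl⟩ (fun n m c d p q => rfl)]
    refine N6_inner2_zero _ fun a b c d => ?_
    have hd := div0 ginv DR hginv hDR1 hB2 hJ l b a
    calc N2 (fun p q => ginv p q * (ginv a c * ginv b d * (DR p q a l b * R β c μ d)))
        = N2 (fun x y => (ginv a c * ginv b d * R β c μ d) * (ginv x y * DR x l b y a)) :=
          N2_congr _ _ fun x y => by rw [hDR3 x y a l b]; ring
      _ = (ginv a c * ginv b d * R β c μ d) * N2 (fun x y => ginv x y * DR x l b y a) :=
          N2_mul_left _ _
      _ = 0 := by rw [hd, mul_zero]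
  have h1V2 : N6 (fun n m c d p q =>
      ginv n m * (ginv c p * ginv d q * (DR n m c μ d * R β p l q))) = 0 := by
    rw [N6_perm (fun n m c d p q => ginv n m * (ginv c p * ginv d q * (DR n m c μ d * R β p l q)))
      (fun a b c d p q => ginv p q * (ginv a c * ginv b d * (DR p q a μ b * R β c l d)))
      ⟨fun v => (v.2.2.1, v.2.2.2.1, v.2.2.2.2.1, v.2.2.2.2.2, v.1, v.2.1),
       fun v => (v.2.2.2.2.1, v.2.2.2.2.2, v.1, v.2.1, v.2.2.1, v.2.2.2.1),
       fun v => rfl, fun v => rfl⟩ (fun n m c d p q => rfl)]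
    refine N6_inner2_zero _ fun a b c d => ?_
    have hd := div0 ginv DR hginv hDR1 hB2 hJ μ b a
    calc N2 (fun p q => ginv p q * (ginv a c * ginv b d * (DR p q a μ b * R β c l d)))
        = N2 (fun x y => (ginv a c * ginv b d * R β c l d) * (ginv x y * DR x μ b y a)) :=
          N2_congr _ _ fun x y => by rw [hDR3 x y a μ b]; ring
      _ = (ginv a c * ginv b d * R β c l d) * N2 (fun x y => ginv x y * DR x μ b y a) :=
          N2_mul_left _ _
      _ = 0 := by rw [hd, mul_zero]
  -- Group 2 : delta contraction and split.
  have h2a : N2 (fun n a => ginv n a * (g a β * N6 (fun c d p c' d' p' =>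
          ginv c c' * ginv d d' * ginv p p' *
            (DR n c d l p * R c' d' μ p' + R c d l p * DR n c' d' μ p'))))
      = N6 (fun c d p c' d' p' => ginv c c' * ginv d d' * ginv p p' *
          (DR β c d l p * R c' d' μ p' + R c d l p * DR β c' d' μ p')) :=
    delta_contract g ginv hinv β (fun n => N6 (fun c d p c' d' p' =>
      ginv c c' * ginv d d' * ginv p p' *
        (DR n c d l p * R c' d' μ p' + R c d l p * DR n c' d' μ p')))
  have h2b : N6 (fun c d p c' d' p' => ginv c c' * ginv d d' * ginv p p' *
          (DR β c d l p * R c' d' μ p' + R c d l p * DR β c' d' μ p'))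
      = N6 (fun a b c d p q => ginv a d * ginv b p * ginv c q * (DR β a b l c * R d p μ q))
        + N6 (fun a b c d p q => ginv a d * ginv b p * ginv c q * (R a b l c * DR β d p μ q)) := by
    rw [← N6_add]
    exact N6_congr _ _ fun a b c d p q => by ring
  -- Group 4 : delta contraction and split.
  have h4a : N2 (fun n a => ginv n a * (g a β * N8 (fun c d p w c' d' p' w' =>
          ginv c c' * ginv d d' * ginv p p' * ginv w w' *
            (DR n c d p w * R c' d' p' w' + R c d p w * DR n c' d' p' w'))))
      = N8 (fun c d p w c' d' p' w' => ginv c c' * ginv d d' * ginv p p' * ginv w w' *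
          (DR β c d p w * R c' d' p' w' + R c d p w * DR β c' d' p' w')) :=
    delta_contract g ginv hinv β (fun n => N8 (fun c d p w c' d' p' w' =>
      ginv c c' * ginv d d' * ginv p p' * ginv w w' *
        (DR n c d p w * R c' d' p' w' + R c d p w * DR n c' d' p' w')))
  have h4b : N8 (fun c d p w c' d' p' w' => ginv c c' * ginv d d' * ginv p p' * ginv w w' *
          (DR β c d p w * R c' d' p' w' + R c d p w * DR β c' d' p' w'))
      = N8 (fun a b c d p q r s => ginv a p * ginv b q * ginv c r * ginv d s *
            (DR β a b c d * R p q r s))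
        + N8 (fun a b c d p q r s => ginv a p * ginv b q * ginv c r * ginv d s *
            (R a b c d * DR β p q r s)) := by
    rw [← N8_add]
    exact N8_congr _ _ fun a b c d p q r s => by ring
  -- Group 3 : merge, split, and kill the divergence piece.
  have h3 : N2 (fun n a => ginv n a * N6 (fun c d p c' d' p' =>
          ginv c c' * ginv d d' * ginv p p' *
            (DR n a c d p * R β c' d' p' + R a c d p * DR n β c' d' p')))
      = N8 (fun n m c d p c' d' p' => ginv n m * (ginv c c' * ginv d d' * ginv p p' *
            (DR n m c d p * R β c' d' p')))
        + N8 (fun n m c d p c' d' p' => ginv n m * (ginv c c' * ginv d d' * ginv p p' *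
            (R m c d p * DR n β c' d' p'))) := by
    rw [N2_mul_N6, ← N8_add]
    exact N8_congr _ _ fun n m c d p c' d' p' => by ring
  have h3V : N8 (fun n m c d p c' d' p' => ginv n m * (ginv c c' * ginv d d' * ginv p p' *
      (DR n m c d p * R β c' d' p'))) = 0 := by
    rw [N8_perm (fun n m c d p c' d' p' => ginv n m * (ginv c c' * ginv d d' * ginv p p' *
        (DR n m c d p * R β c' d' p')))
      (fun a b c d p q r s => ginv r s * (ginv a d * ginv b p * ginv c q *
        (DR r s a b c * R β d p q)))
      ⟨fun v => (v.2.2.1, v.2.2.2.1, v.2.2.2.2.1, v.2.2.2.2.2.1, v.2.2.2.2.2.2.1,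
          v.2.2.2.2.2.2.2, v.1, v.2.1),
       fun v => (v.2.2.2.2.2.2.1, v.2.2.2.2.2.2.2, v.1, v.2.1, v.2.2.1, v.2.2.2.1,
          v.2.2.2.2.1, v.2.2.2.2.2.1),
       fun v => rfl, fun v => rfl⟩ (fun n m c d p c' d' p' => rfl)]
    refine N8_inner2_zero _ fun a b c d p q => ?_
    have hd := div0 ginv DR hginv hDR1 hB2 hJ b c a
    calc N2 (fun r s => ginv r s * (ginv a d * ginv b p * ginv c q * (DR r s a b c * R β d p q)))
        = N2 (fun x y => (ginv a d * ginv b p * ginv c q * R β d p q) *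
            (ginv x y * DR x b c y a)) :=
          N2_congr _ _ fun x y => by rw [hDR3 x y a b c]; ring
      _ = (ginv a d * ginv b p * ginv c q * R β d p q) * N2 (fun x y => ginv x y * DR x b c y a) :=
          N2_mul_left _ _
      _ = 0 := by rw [hd, mul_zero]
  -- The key halving identities coming from the second Bianchi identity.
  have h2A1 : 2 * N6 (fun n m c d p q =>
        ginv n m * (ginv c p * ginv d q * (R m c l d * DR n β p μ q)))
      = N6 (fun a b c d p q => ginv a d * ginv b p * ginv c q * (R a b l c * DR β d p μ q)) := by
    have hzero : N6 (fun n m c d p q => ginv n m * (ginv c p * ginv d q *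
        (R m c l d * (DR n β p μ q + DR β p n μ q + DR p n β μ q)))) = 0 :=
      N6_eq_zero _ fun n m c d p q => by rw [hB2 n β p μ q]; ring
    have hsplit : N6 (fun n m c d p q => ginv n m * (ginv c p * ginv d q *
          (R m c l d * (DR n β p μ q + DR β p n μ q + DR p n β μ q))))
        = N6 (fun n m c d p q => ginv n m * (ginv c p * ginv d q * (R m c l d * DR n β p μ q)))
          + N6 (fun n m c d p q => ginv n m * (ginv c p * ginv d q * (R m c l d * DR β p n μ q)))
          + N6 (fun n m c d p q => ginv n m * (ginv c p * ginv d q * (R m c l d * DR p n β μ q))) := by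
      rw [← N6_add, ← N6_add]
      exact N6_congr _ _ fun n m c d p q => by ring
    have hX : N6 (fun n m c d p q => ginv n m * (ginv c p * ginv d q * (R m c l d * DR β p n μ q)))
        = - N6 (fun a b c d p q => ginv a d * ginv b p * ginv c q * (R a b l c * DR β d p μ q)) := by
      rw [← N6_neg]
      refine N6_perm _ _
        ⟨fun v => (v.2.1, v.2.2.1, v.2.2.2.1, v.1, v.2.2.2.2.1, v.2.2.2.2.2),
         fun v => (v.2.2.2.1, v.1, v.2.1, v.2.2.1, v.2.2.2.2.1, v.2.2.2.2.2),
         fun v => rfl, fun v => rfl⟩ (fun n m c d p q => ?_)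
      show ginv n m * (ginv c p * ginv d q * (R m c l d * DR β p n μ q))
        = -(ginv m n * ginv c p * ginv d q * (R m c l d * DR β n p μ q))
      rw [hginv n m, hDR1 β p n μ q]; ring
    have hY : N6 (fun n m c d p q => ginv n m * (ginv c p * ginv d q * (R m c l d * DR p n β μ q)))
        = N6 (fun n m c d p q =>
            ginv n m * (ginv c p * ginv d q * (R m c l d * DR n β p μ q))) := by
      refine N6_perm _ _
        ⟨fun v => (v.2.2.2.2.1, v.2.2.1, v.2.1, v.2.2.2.1, v.1, v.2.2.2.2.2),
         fun v => (v.2.2.2.2.1, v.2.2.1, v.2.1, v.2.2.2.1, v.1, v.2.2.2.2.2),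
         fun v => rfl, fun v => rfl⟩ (fun n m c d p q => ?_)
      show ginv n m * (ginv c p * ginv d q * (R m c l d * DR p n β μ q))
        = ginv p c * (ginv m n * ginv d q * (R c m l d * DR p β n μ q))
      rw [hginv n m, hginv c p, hR1 m c l d, hDR1 p n β μ q]; ring
    linarith
  have h2A2 : 2 * N6 (fun n m c d p q =>
        ginv n m * (ginv c p * ginv d q * (R m c μ d * DR n β p l q)))
      = N6 (fun a b c d p q => ginv a d * ginv b p * ginv c q * (DR β a b l c * R d p μ q)) := by
    have hzero : N6 (fun n m c d p q => ginv n m * (ginv c p * ginv d q *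
        (R m c μ d * (DR n β p l q + DR β p n l q + DR p n β l q)))) = 0 :=
      N6_eq_zero _ fun n m c d p q => by rw [hB2 n β p l q]; ring
    have hsplit : N6 (fun n m c d p q => ginv n m * (ginv c p * ginv d q *
          (R m c μ d * (DR n β p l q + DR β p n l q + DR p n β l q))))
        = N6 (fun n m c d p q => ginv n m * (ginv c p * ginv d q * (R m c μ d * DR n β p l q)))
          + N6 (fun n m c d p q => ginv n m * (ginv c p * ginv d q * (R m c μ d * DR β p n l q)))
          + N6 (fun n m c d p q => ginv n m * (ginv c p * ginv d q * (R m c μ d * DR p n β l q))) := by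
      rw [← N6_add, ← N6_add]
      exact N6_congr _ _ fun n m c d p q => by ring
    have hX : N6 (fun n m c d p q => ginv n m * (ginv c p * ginv d q * (R m c μ d * DR β p n l q)))
        = - N6 (fun a b c d p q => ginv a d * ginv b p * ginv c q * (DR β a b l c * R d p μ q)) := by
      rw [← N6_neg]
      refine N6_perm _ _
        ⟨fun v => (v.1, v.2.2.2.2.1, v.2.2.2.2.2, v.2.1, v.2.2.1, v.2.2.2.1),
         fun v => (v.1, v.2.2.2.1, v.2.2.2.2.1, v.2.2.2.2.2, v.2.1, v.2.2.1),
         fun v => rfl, fun v => rfl⟩ (fun n m c d p q => ?_)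
      show ginv n m * (ginv c p * ginv d q * (R m c μ d * DR β p n l q))
        = -(ginv n m * ginv p c * ginv q d * (DR β n p l q * R m c μ d))
      rw [hginv c p, hginv d q, hDR1 β p n l q]; ring
    have hY : N6 (fun n m c d p q => ginv n m * (ginv c p * ginv d q * (R m c μ d * DR p n β l q)))
        = N6 (fun n m c d p q =>
            ginv n m * (ginv c p * ginv d q * (R m c μ d * DR n β p l q))) := by
      refine N6_perm _ _
        ⟨fun v => (v.2.2.2.2.1, v.2.2.1, v.2.1, v.2.2.2.1, v.1, v.2.2.2.2.2),
         fun v => (v.2.2.2.2.1, v.2.2.1, v.2.1, v.2.2.2.1, v.1, v.2.2.2.2.2),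
         fun v => rfl, fun v => rfl⟩ (fun n m c d p q => ?_)
      show ginv n m * (ginv c p * ginv d q * (R m c μ d * DR p n β l q))
        = ginv p c * (ginv m n * ginv d q * (R c m μ d * DR p β n l q))
      rw [hginv n m, hginv c p, hR1 m c μ d, hDR1 p n β l q]; ring
    linarith
  have h3C : 2 * N8 (fun n m c d p c' d' p' => ginv n m * (ginv c c' * ginv d d' * ginv p p' *
        (R m c d p * DR n β c' d' p')))
      = N8 (fun a b c d p q r s => ginv a p * ginv b q * ginv c r * ginv d s *
          (R a b c d * DR β p q r s)) := by
    have hzero : N8 (fun n m c d p c' d' p' => ginv n m * (ginv c c' * ginv d d' * ginv p p' *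
        (R m c d p * (DR n β c' d' p' + DR β c' n d' p' + DR c' n β d' p')))) = 0 :=
      N8_eq_zero _ fun n m c d p c' d' p' => by rw [hB2 n β c' d' p']; ring
    have hsplit : N8 (fun n m c d p c' d' p' => ginv n m * (ginv c c' * ginv d d' * ginv p p' *
          (R m c d p * (DR n β c' d' p' + DR β c' n d' p' + DR c' n β d' p'))))
        = N8 (fun n m c d p c' d' p' => ginv n m * (ginv c c' * ginv d d' * ginv p p' *
            (R m c d p * DR n β c' d' p')))
          + N8 (fun n m c d p c' d' p' => ginv n m * (ginv c c' * ginv d d' * ginv p p' *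
            (R m c d p * DR β c' n d' p')))
          + N8 (fun n m c d p c' d' p' => ginv n m * (ginv c c' * ginv d d' * ginv p p' *
            (R m c d p * DR c' n β d' p'))) := by
      rw [← N8_add, ← N8_add]
      exact N8_congr _ _ fun n m c d p c' d' p' => by ring
    have hX : N8 (fun n m c d p c' d' p' => ginv n m * (ginv c c' * ginv d d' * ginv p p' *
          (R m c d p * DR β c' n d' p')))
        = - N8 (fun a b c d p q r s => ginv a p * ginv b q * ginv c r * ginv d s *
            (R a b c d * DR β p q r s)) := by
      rw [← N8_neg]
      refine N8_perm _ _
        ⟨fun v => (v.2.1, v.2.2.1, v.2.2.2.1, v.2.2.2.2.1, v.1, v.2.2.2.2.2.1,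
            v.2.2.2.2.2.2.1, v.2.2.2.2.2.2.2),
         fun v => (v.2.2.2.2.1, v.1, v.2.1, v.2.2.1, v.2.2.2.1, v.2.2.2.2.2.1,
            v.2.2.2.2.2.2.1, v.2.2.2.2.2.2.2),
         fun v => rfl, fun v => rfl⟩ (fun n m c d p c' d' p' => ?_)
      show ginv n m * (ginv c c' * ginv d d' * ginv p p' * (R m c d p * DR β c' n d' p'))
        = -(ginv m n * ginv c c' * ginv d d' * ginv p p' * (R m c d p * DR β n c' d' p'))
      rw [hginv n m, hDR1 β c' n d' p']; ring
    have hY : N8 (fun n m c d p c' d' p' => ginv n m * (ginv c c' * ginv d d' * ginv p p' *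
          (R m c d p * DR c' n β d' p')))
        = N8 (fun n m c d p c' d' p' => ginv n m * (ginv c c' * ginv d d' * ginv p p' *
            (R m c d p * DR n β c' d' p'))) := by
      refine N8_perm _ _
        ⟨fun v => (v.2.2.2.2.2.1, v.2.2.1, v.2.1, v.2.2.2.1, v.2.2.2.2.1, v.1,
            v.2.2.2.2.2.2.1, v.2.2.2.2.2.2.2),
         fun v => (v.2.2.2.2.2.1, v.2.2.1, v.2.1, v.2.2.2.1, v.2.2.2.2.1, v.1,
            v.2.2.2.2.2.2.1, v.2.2.2.2.2.2.2),
         fun v => rfl, fun v => rfl⟩ (fun n m c d p c' d' p' => ?_)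
      show ginv n m * (ginv c c' * ginv d d' * ginv p p' * (R m c d p * DR c' n β d' p'))
        = ginv c' c * (ginv m n * ginv d d' * ginv p p' * (R c m d p * DR c' β n d' p'))
      rw [hginv n m, hginv c c', hR1 m c d p, hDR1 c' n β d' p']; ring
    linarith
  have hE : N8 (fun a b c d p q r s => ginv a p * ginv b q * ginv c r * ginv d s *
        (DR β a b c d * R p q r s))
      = N8 (fun a b c d p q r s => ginv a p * ginv b q * ginv c r * ginv d s *
        (R a b c d * DR β p q r s)) := by
    refine N8_perm _ _
      ⟨fun v => (v.2.2.2.2.1, v.2.2.2.2.2.1, v.2.2.2.2.2.2.1, v.2.2.2.2.2.2.2,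
          v.1, v.2.1, v.2.2.1, v.2.2.2.1),
       fun v => (v.2.2.2.2.1, v.2.2.2.2.2.1, v.2.2.2.2.2.2.1, v.2.2.2.2.2.2.2,
          v.1, v.2.1, v.2.2.1, v.2.2.2.1),
       fun v => rfl, fun v => rfl⟩ (fun a b c d p q r s => ?_)
    show ginv a p * ginv b q * ginv c r * ginv d s * (DR β a b c d * R p q r s)
      = ginv p a * ginv q b * ginv r c * ginv s d * (R p q r s * DR β a b c d)
    rw [hginv a p, hginv b q, hginv c r, hginv d s]; ring
  rw [stepA, hcomb, h1, h2a, h2b, h3, h4a, h4b, h1V1, h1V2, h3V]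
  linear_combination (1/2) * h2A1 + (1/2) * h2A2 + (-(1/4) * g l μ) * h3C
    + ((1/8) * g l μ) * hE
end
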